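/- Let G be an MB-homogeneous simple graph on a countably infinite vertex set containing at least one nonedge (two distinct nonadjacent vertices). If A is a finite set of vertices of G such that some vertex of G is a co-cone over A, then there exists an infinite set of vertices, pairwise nonadjacent, each of which is a co-cone over A. -/

import Mathlib

open Classical in
/-- Extend `f` by mapping `a` to `b`. -/
noncomputable def extendBy {V : Type} (f : V → V) (a b : V) : V → V :=
  Function.update f a b

section Defs

variable {V : Type}

/-- `f` is a graph homomorphism on the finite induced subgraph on `A`. -/
def IsHomOn (G : SimpleGraph V) (A : Finset V) (f : V → V) : Prop :=
  ∀ ⦃u v : V⦄, u ∈ A → v ∈ A → G.Adj u v → G.Adj (f u) (f v)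

/-- `f` is an injective graph homomorphism (monomorphism) on `A`. -/
def IsMonOn (G : SimpleGraph V) (A : Finset V) (f : V → V) : Prop :=
  IsHomOn G A f ∧ Set.InjOn f (↑A : Set V)

/-- `f` is an isomorphism of the induced subgraph on `A` onto its image. -/
def IsIsoOn (G : SimpleGraph V) (A : Finset V) (f : V → V) : Prop :=
  Set.InjOn f (↑A : Set V) ∧
    ∀ ⦃u v : V⦄, u ∈ A → v ∈ A → (G.Adj u v ↔ G.Adj (f u) (f v))

/-- `F` is a graph homomorphism `G → G`. -/
def IsHomEndo (G : SimpleGraph V) (F : V → V) : Prop :=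
  ∀ ⦃u v : V⦄, G.Adj u v → G.Adj (F u) (F v)

/-- `F` is an injective graph homomorphism `G → G`. -/
def IsMonEndo (G : SimpleGraph V) (F : V → V) : Prop :=
  IsHomEndo G F ∧ Function.Injective F

/-- `F` is a self-embedding of `G`. -/
def IsEmbEndo (G : SimpleGraph V) (F : V → V) : Prop :=
  Function.Injective F ∧ ∀ u v : V, G.Adj u v ↔ G.Adj (F u) (F v)

/-- `F` is a surjective graph homomorphism `G → G`. -/
def IsEpiEndo (G : SimpleGraph V) (F : V → V) : Prop :=
  IsHomEndo G F ∧ Function.Surjective F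

/-- `F` is a bijective graph homomorphism `G → G`. -/
def IsBiEndo (G : SimpleGraph V) (F : V → V) : Prop :=
  IsHomEndo G F ∧ Function.Bijective F

/-- `F` is an automorphism of `G`. -/
def IsAutEndo (G : SimpleGraph V) (F : V → V) : Prop :=
  Function.Bijective F ∧ ∀ u v : V, G.Adj u v ↔ G.Adj (F u) (F v)

def IsHHHom (G : SimpleGraph V) : Prop :=
  ∀ (A : Finset V) (f : V → V), IsHomOn G A f →
    ∃ F : V → V, IsHomEndo G F ∧ ∀ a ∈ A, F a = f a

def IsHMHom (G : SimpleGraph V) : Prop :=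
  ∀ (A : Finset V) (f : V → V), IsHomOn G A f →
    ∃ F : V → V, IsMonEndo G F ∧ ∀ a ∈ A, F a = f a

def IsHIHom (G : SimpleGraph V) : Prop :=
  ∀ (A : Finset V) (f : V → V), IsHomOn G A f →
    ∃ F : V → V, IsEmbEndo G F ∧ ∀ a ∈ A, F a = f a

def IsHEHom (G : SimpleGraph V) : Prop :=
  ∀ (A : Finset V) (f : V → V), IsHomOn G A f →
    ∃ F : V → V, IsEpiEndo G F ∧ ∀ a ∈ A, F a = f a

def IsHBHom (G : SimpleGraph V) : Prop :=
  ∀ (A : Finset V) (f : V → V), IsHomOn G A f →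
    ∃ F : V → V, IsBiEndo G F ∧ ∀ a ∈ A, F a = f a

def IsHAHom (G : SimpleGraph V) : Prop :=
  ∀ (A : Finset V) (f : V → V), IsHomOn G A f →
    ∃ F : V → V, IsAutEndo G F ∧ ∀ a ∈ A, F a = f a

def IsMHHom (G : SimpleGraph V) : Prop :=
  ∀ (A : Finset V) (f : V → V), IsMonOn G A f →
    ∃ F : V → V, IsHomEndo G F ∧ ∀ a ∈ A, F a = f a

def IsMMHom (G : SimpleGraph V) : Prop :=
  ∀ (A : Finset V) (f : V → V), IsMonOn G A f →
    ∃ F : V → V, IsMonEndo G F ∧ ∀ a ∈ A, F a = f a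

def IsMIHom (G : SimpleGraph V) : Prop :=
  ∀ (A : Finset V) (f : V → V), IsMonOn G A f →
    ∃ F : V → V, IsEmbEndo G F ∧ ∀ a ∈ A, F a = f a

def IsMEHom (G : SimpleGraph V) : Prop :=
  ∀ (A : Finset V) (f : V → V), IsMonOn G A f →
    ∃ F : V → V, IsEpiEndo G F ∧ ∀ a ∈ A, F a = f a

def IsMBHom (G : SimpleGraph V) : Prop :=
  ∀ (A : Finset V) (f : V → V), IsMonOn G A f →
    ∃ F : V → V, IsBiEndo G F ∧ ∀ a ∈ A, F a = f a

def IsMAHom (G : SimpleGraph V) : Prop :=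
  ∀ (A : Finset V) (f : V → V), IsMonOn G A f →
    ∃ F : V → V, IsAutEndo G F ∧ ∀ a ∈ A, F a = f a

def IsIHHom (G : SimpleGraph V) : Prop :=
  ∀ (A : Finset V) (f : V → V), IsIsoOn G A f →
    ∃ F : V → V, IsHomEndo G F ∧ ∀ a ∈ A, F a = f a

def IsIEHom (G : SimpleGraph V) : Prop :=
  ∀ (A : Finset V) (f : V → V), IsIsoOn G A f →
    ∃ F : V → V, IsEpiEndo G F ∧ ∀ a ∈ A, F a = f a

/-- A cone over a finite set `S`: a vertex outside `S` adjacent to every vertex of `S`. -/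
def IsCone (G : SimpleGraph V) (S : Finset V) (v : V) : Prop :=
  v ∉ S ∧ ∀ s ∈ S, G.Adj v s

/-- A co-cone over a finite set `S`: a vertex outside `S` adjacent to no vertex of `S`. -/
def IsCoCone (G : SimpleGraph V) (S : Finset V) (v : V) : Prop :=
  v ∉ S ∧ ∀ s ∈ S, ¬ G.Adj v s

def HasCoCone (G : SimpleGraph V) (S : Finset V) : Prop :=
  ∃ v : V, IsCoCone G S v

open Classical in
/-- Property (†): every finite surjective homomorphism, and vertex `b` outside its image,
admits a preimage `a` outside the domain such that `f ∪ {(a,b)}` is a homomorphism. -/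
def PropDagger (G : SimpleGraph V) : Prop :=
  ∀ (A : Finset V) (f : V → V), IsHomOn G A f →
    ∀ b : V, b ∉ f '' (↑A : Set V) →
      ∃ a : V, a ∉ A ∧ IsHomOn G (insert a A) (extendBy f a b)

open Classical in
/-- Property (*): every finite surjective monomorphism, and vertex `c` outside its domain,
admits an image `d` outside the codomain such that `f ∪ {(c,d)}` is a homomorphism. -/
def PropStar (G : SimpleGraph V) : Prop :=
  ∀ (A : Finset V) (f : V → V), IsMonOn G A f →
    ∀ c : V, c ∉ A →
      ∃ d : V, d ∉ f '' (↑A : Set V) ∧ IsHomOn G (insert c A) (extendBy f c d)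

/-- The disjoint union of `ι`-many complete graphs, each with vertex set `κ`. -/
def cliqueSum (ι κ : Type) : SimpleGraph (ι × κ) :=
  SimpleGraph.fromRel (fun p q => p.1 = q.1)

end Defs

section AuxLemmas

variable {V : Type} [Infinite V] (G : SimpleGraph V)

/-- In an MB-homogeneous graph with a nonedge, every vertex has a non-neighbor. -/
lemma aux_nonnbr (hMB : IsMBHom G) (hne : ∃ u v : V, u ≠ v ∧ ¬ G.Adj u v) (x : V) :
    ∃ t, t ≠ x ∧ ¬ G.Adj x t := by
  classical
  obtain ⟨u, w, huw, hnadj⟩ := hne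
  have hmon : IsMonOn G ({x} : Finset V) (fun _ => u) := by
    constructor
    · intro p q hp hq hadj
      simp only [Finset.mem_singleton] at hp hq
      subst hp; subst hq
      exact absurd hadj (G.loopless.irrefl _)
    · intro p hp q hq _
      simp only [Finset.coe_singleton, Set.mem_singleton_iff] at hp hq
      rw [hp, hq]
  obtain ⟨F, ⟨hFhom, hFbij⟩, hFa⟩ := hMB {x} (fun _ => u) hmon
  obtain ⟨z, hz⟩ := hFbij.2 w
  have hFx : F x = u := hFa x (Finset.mem_singleton_self x)
  refine ⟨z, ?_, ?_⟩
  · intro h; apply huw; rw [← hFx, ← hz, h]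
  · intro h
    have := hFhom h
    rw [hFx, hz] at this
    exact hnadj this

/-- Every vertex has a non-neighbor avoiding any finite set. -/
lemma aux_nonnbr_escape (hMB : IsMBHom G) (hne : ∃ u v : V, u ≠ v ∧ ¬ G.Adj u v)
    (x : V) (B : Finset V) :
    ∃ t, t ∉ B ∧ t ≠ x ∧ ¬ G.Adj x t := by
  classical
  by_contra hcon
  push_neg at hcon
  have hmemB : ∀ t, t ≠ x → ¬ G.Adj x t → t ∈ B := by
    intro t ht hna
    by_contra hB
    exact hna (hcon t hB ht)
  obtain ⟨t0, ht0x, ht0na⟩ := aux_nonnbr G hMB hne x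
  set N : Finset V := B.filter (fun t => t ≠ x ∧ ¬ G.Adj x t) with hN
  have hmemN : ∀ t, t ≠ x → ¬ G.Adj x t → t ∈ N := by
    intro t h1 h2
    rw [hN, Finset.mem_filter]
    exact ⟨hmemB t h1 h2, h1, h2⟩
  have hNsub : ∀ t ∈ N, t ∈ B ∧ t ≠ x ∧ ¬ G.Adj x t := by
    intro t ht
    rw [hN, Finset.mem_filter] at ht
    exact ⟨ht.1, ht.2⟩
  obtain ⟨t, ht⟩ := Infinite.exists_notMem_finset (insert x B)
  have htx : t ≠ x := fun h => ht (by simp [h])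
  have htB : t ∉ B := fun h => ht (by simp [h])
  set f : V → V := Function.update id t0 t with hf
  have hfx : f x = x := by
    simp [hf, Function.update]
    intro h; exact absurd h.symm ht0x
  have hft0 : f t0 = t := by simp [hf]
  have hmon : IsMonOn G ({x, t0} : Finset V) f := by
    constructor
    · intro p q hp hq hadj
      simp only [Finset.mem_insert, Finset.mem_singleton] at hp hq
      rcases hp with rfl | rfl <;> rcases hq with rfl | rfl
      · exact absurd hadj (G.loopless.irrefl _)
      · exact absurd hadj ht0na
      · exact absurd hadj.symm ht0na
      · exact absurd hadj (G.loopless.irrefl _)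
    · intro p hp q hq hpq
      simp only [Finset.coe_insert, Finset.coe_singleton, Set.mem_insert_iff,
        Set.mem_singleton_iff] at hp hq
      rcases hp with rfl | rfl <;> rcases hq with rfl | rfl
      · rfl
      · rw [hfx, hft0] at hpq; exact absurd hpq.symm htx
      · rw [hfx, hft0] at hpq; exact absurd hpq htx
      · rfl
  obtain ⟨F, ⟨hFhom, hFbij⟩, hFa⟩ := hMB {x, t0} f hmon
  have hFx : F x = x := by
    rw [hFa x (by simp), hfx]
  have hFt0 : F t0 = t := by
    rw [hFa t0 (by simp), hft0]
  set e := Equiv.ofBijective F hFbij with he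
  have hNimg : N ⊆ N.image F := by
    intro n hn
    obtain ⟨_, hnx, hnna⟩ := hNsub n hn
    set m := e.symm n with hm
    have hFm : F m = n := e.apply_symm_apply n
    have hmx : m ≠ x := by
      intro h; apply hnx; rw [← hFm, h, hFx]
    have hmna : ¬ G.Adj x m := by
      intro h
      have := hFhom h
      rw [hFx, hFm] at this
      exact hnna this
    exact Finset.mem_image.mpr ⟨m, hmemN m hmx hmna, hFm⟩
  have heq : N = N.image F := Finset.eq_of_subset_of_card_le hNimg Finset.card_image_le
  have ht0N : t0 ∈ N := hmemN t0 ht0x ht0na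
  have : t ∈ N := by
    rw [heq]
    exact Finset.mem_image.mpr ⟨t0, ht0N, hFt0⟩
  exact htB (hNsub t this).1

/-- Key step: a co-cone over `S` can be extended, i.e. `insert v S` also has a co-cone. -/
lemma aux_key [DecidableEq V] (hMB : IsMBHom G) (hne : ∃ u v : V, u ≠ v ∧ ¬ G.Adj u v)
    (S : Finset V) (v : V) (hv : IsCoCone G S v) :
    ∃ z, IsCoCone G (insert v S) z := by
  classical
  obtain ⟨t, htS, htv, htna⟩ := aux_nonnbr_escape G hMB hne v (insert v S)
  set f : V → V := Function.update id v t with hf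
  have hfv : f v = t := by simp [hf]
  have hfS : ∀ s ∈ S, f s = s := by
    intro s hs
    have : s ≠ v := fun h => hv.1 (h ▸ hs)
    simp [hf, Function.update]
    intro h; exact absurd h this
  have hmon : IsMonOn G (insert v S) f := by
    constructor
    · intro p q hp hq hadj
      rw [Finset.mem_insert] at hp hq
      rcases hp with rfl | hp
      · rcases hq with rfl | hq
        · exact absurd hadj (G.loopless.irrefl _)
        · exact absurd hadj (hv.2 q hq)
      · rcases hq with rfl | hq
        · exact absurd hadj.symm (hv.2 p hp)
        · rw [hfS p hp, hfS q hq]; exact hadj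
    · intro p hp q hq hpq
      simp only [Finset.coe_insert, Set.mem_insert_iff, Finset.mem_coe] at hp hq
      rcases hp with hp | hp
      · rcases hq with hq | hq
        · rw [hp, hq]
        · exfalso
          apply htS
          rw [hp, hfv, hfS q hq] at hpq
          rw [hpq]
          exact Finset.mem_insert_of_mem hq
      · rcases hq with hq | hq
        · exfalso
          apply htS
          rw [hq, hfv, hfS p hp] at hpq
          rw [← hpq]
          exact Finset.mem_insert_of_mem hp
        · rwa [hfS p hp, hfS q hq] at hpq
  obtain ⟨F, ⟨hFhom, hFbij⟩, hFa⟩ := hMB (insert v S) f hmon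
  obtain ⟨z, hz⟩ := hFbij.2 v
  have hFv : F v = t := by rw [hFa v (Finset.mem_insert_self v S), hfv]
  refine ⟨z, ?_, ?_⟩
  · intro hzmem
    rw [Finset.mem_insert] at hzmem
    rcases hzmem with rfl | hzS
    · exact htv (by rw [← hz, hFv])
    · have : F z = z := by rw [hFa z (Finset.mem_insert_of_mem hzS), hfS z hzS]
      rw [this] at hz
      exact hv.1 (hz ▸ hzS)
  · intro s hs hadj
    have := hFhom hadj
    rw [hz, hFa s hs] at this
    rw [Finset.mem_insert] at hs
    rcases hs with rfl | hsS
    · rw [hfv] at this; exact htna this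
    · rw [hfS s hsS] at this; exact hv.2 s hsS this

end AuxLemmas

/-- In an MB-homogeneous countably infinite graph with a nonedge, any finite
set with a co-cone has an infinite independent set of co-cones. -/
theorem stmt_12 {V : Type} [Countable V] [Infinite V] (G : SimpleGraph V)
    (hMB : IsMBHom G) (hne : ∃ u v : V, u ≠ v ∧ ¬ G.Adj u v)
    (A : Finset V) (hA : ∃ v : V, IsCoCone G A v) :
    ∃ T : Set V, T.Infinite ∧ T.Pairwise (fun a b => ¬ G.Adj a b) ∧
      ∀ v ∈ T, IsCoCone G A v := by
  classical
  obtain ⟨v0, hv0⟩ := hA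
  let P := {p : Finset V × V // A ⊆ p.1 ∧ IsCoCone G p.1 p.2}
  let step : P → P := fun p =>
    ⟨(insert p.1.2 p.1.1, Classical.choose (aux_key G hMB hne p.1.1 p.1.2 p.2.2)),
      p.2.1.trans (Finset.subset_insert _ _),
      Classical.choose_spec (aux_key G hMB hne p.1.1 p.1.2 p.2.2)⟩
  let q : ℕ → P := fun n => step^[n] ⟨(A, v0), Finset.Subset.refl A, hv0⟩
  let Sn : ℕ → Finset V := fun n => (q n).1.1
  let vn : ℕ → V := fun n => (q n).1.2
  have hstep : ∀ n, q (n + 1) = step (q n) := fun n =>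
    Function.iterate_succ_apply' step n _
  have hSsucc : ∀ n, Sn (n + 1) = insert (vn n) (Sn n) := by
    intro n
    show (q (n + 1)).1.1 = _
    rw [hstep n]
  have hAsub : ∀ n, A ⊆ Sn n := fun n => (q n).2.1
  have hcc : ∀ n, IsCoCone G (Sn n) (vn n) := fun n => (q n).2.2
  have hmono : ∀ m n, m ≤ n → Sn m ⊆ Sn n := by
    intro m n hmn
    induction n, hmn using Nat.le_induction with
    | base => exact Finset.Subset.refl _
    | succ n hmn ih =>
      refine ih.trans ?_
      rw [hSsucc n]
      exact Finset.subset_insert _ _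
  have hmem : ∀ m n, m < n → vn m ∈ Sn n := by
    intro m n hmn
    have h1 : vn m ∈ Sn (m + 1) := by
      rw [hSsucc m]; exact Finset.mem_insert_self _ _
    exact hmono (m + 1) n hmn h1
  have hinj : Function.Injective vn := by
    intro m n h
    by_contra hne'
    rcases Nat.lt_or_ge m n with hlt | hge
    · exact (hcc n).1 (h ▸ hmem m n hlt)
    · have hlt : n < m := lt_of_le_of_ne hge (Ne.symm hne')
      exact (hcc m).1 (h ▸ hmem n m hlt)
  refine ⟨Set.range vn, Set.infinite_range_of_injective hinj, ?_, ?_⟩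
  · rintro a ⟨m, rfl⟩ b ⟨n, rfl⟩ hab
    have hmn : m ≠ n := fun h => hab (by rw [h])
    rcases Nat.lt_or_ge m n with hlt | hge
    · intro hadj
      exact (hcc n).2 (vn m) (hmem m n hlt) hadj.symm
    · have hlt : n < m := lt_of_le_of_ne hge (Ne.symm hmn)
      intro hadj
      exact (hcc m).2 (vn n) (hmem n m hlt) hadj
  · rintro v ⟨n, rfl⟩
    exact ⟨fun h => (hcc n).1 (hAsub n h), fun s hs => (hcc n).2 s (hAsub n hs)⟩
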